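/- arXiv:2310.10150 — 4 statements merged into one kernel-verified Lean document; each statement's English description precedes it below -/
import Mathlib

section
/- Let $H$ be a derivation of a commutative ring $A$ equipped with a distinguished derivation $\partial_x$ such that $[H, \partial_x] = 0$. Let $f \in A$ with $1+f$ invertible, and suppose $H(f) = \partial_x R$ for some $R \in A$. Define the operator $\partial_y := (1+f)^{-1}\partial_x$. Then $H - R\partial_y$ is a derivation of $A$ that commutes with $\partial_y$, i.e., $[H - R\partial_y, \partial_y] = 0$. -/
/-- if `H` is a derivation commuting with `∂_x`, `1+f` is invertible
(with inverse `v`), and `H f = ∂_x R`, then `H - R ∂_y` (where `∂_y = (1+f)⁻¹ ∂_x`)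
is a derivation commuting with `∂_y`. -/
theorem statement1 (A : Type*) [CommRing A] (H dX : A → A)
    (hHadd : ∀ a b, H (a + b) = H a + H b)
    (hHmul : ∀ a b, H (a * b) = a * H b + H a * b)
    (hdadd : ∀ a b, dX (a + b) = dX a + dX b)
    (hdmul : ∀ a b, dX (a * b) = a * dX b + dX a * b)
    (hcomm : ∀ a, H (dX a) = dX (H a))
    (f R v : A) (hv : v * (1 + f) = 1) (hR : H f = dX R)
    (dY : A → A) (hdY : ∀ a, dY a = v * dX a)
    (F : A → A) (hF : ∀ a, F a = H a - R * dY a) :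
    (∀ a b, F (a + b) = F a + F b) ∧
    (∀ a b, F (a * b) = a * F b + F a * b) ∧
    (∀ a, F (dY a) = dY (F a)) := by
  -- basic consequences
  have hH1 : H 1 = 0 := by
    have h := hHmul 1 1; rw [one_mul] at h; linear_combination -h
  have hd1 : dX 1 = 0 := by
    have h := hdmul 1 1; rw [one_mul] at h; linear_combination -h
  have hHsub : ∀ a b, H (a - b) = H a - H b := by
    intro a b
    have h := hHadd (a - b) b
    rw [sub_add_cancel] at h
    linear_combination -h
  have hdsub : ∀ a b, dX (a - b) = dX a - dX b := by
    intro a b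
    have h := hdadd (a - b) b
    rw [sub_add_cancel] at h
    linear_combination -h
  -- H v and dX v
  have hH1f : H (1 + f) = dX R := by rw [hHadd, hH1, hR, zero_add]
  have hd1f : dX (1 + f) = dX f := by rw [hdadd, hd1, zero_add]
  have hHv1 : H v * (1 + f) = -(v * dX R) := by
    have h := hHmul v (1 + f)
    rw [hv, hH1, hH1f] at h
    linear_combination -h
  have hdv1 : dX v * (1 + f) = -(v * dX f) := by
    have h := hdmul v (1 + f)
    rw [hv, hd1, hd1f] at h
    linear_combination -h
  have hHv : H v = -(v * v * dX R) := by
    calc H v = H v * (v * (1 + f)) := by rw [hv, mul_one]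
    _ = v * (H v * (1 + f)) := by ring
    _ = -(v * v * dX R) := by rw [hHv1]; ring
  have hdv : dX v = -(v * v * dX f) := by
    calc dX v = dX v * (v * (1 + f)) := by rw [hv, mul_one]
    _ = v * (dX v * (1 + f)) := by ring
    _ = -(v * v * dX f) := by rw [hdv1]; ring
  refine ⟨?_, ?_, ?_⟩
  · intro a b
    rw [hF, hF, hF, hdY, hdY, hdY, hHadd, hdadd]
    ring
  · intro a b
    rw [hF, hF, hF, hdY, hdY, hdY, hHmul, hdmul]
    ring
  · intro a
    simp only [hF, hdY]
    rw [hHmul, hdsub, hdmul R (v * dX a), hdmul v (dX a), hcomm, hHv, hdv]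
    ring
end

section
/- Let $A$ be a commutative ring with derivation $\partial_x$, let $H$ be a derivation of $A$ commuting with $\partial_x$, let $f \in A$ with $1+f$ invertible and $H(f) = \partial_x R$. Set $\partial_y := (1+f)^{-1}\partial_x$. If $g \in A$ satisfies $H(g) = \partial_x R_g$ for some $R_g \in A$, then $(H - R\partial_y)\left(\frac{g}{1+f}\right) = \partial_y\left(R_g - \frac{gR}{1+f}\right)$. -/
/-- if `H g = ∂_x R_g`, then
`(H - R ∂_y)(g/(1+f)) = ∂_y (R_g - gR/(1+f))`, where `∂_y = (1+f)⁻¹ ∂_x`,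
`H f = ∂_x R`, and `v = (1+f)⁻¹`. -/
theorem statement3 (A : Type*) [CommRing A] (H dX : A → A)
    (hHadd : ∀ a b, H (a + b) = H a + H b)
    (hHmul : ∀ a b, H (a * b) = a * H b + H a * b)
    (hdadd : ∀ a b, dX (a + b) = dX a + dX b)
    (hdmul : ∀ a b, dX (a * b) = a * dX b + dX a * b)
    (hcomm : ∀ a, H (dX a) = dX (H a))
    (f R v : A) (hv : v * (1 + f) = 1) (hR : H f = dX R)
    (dY : A → A) (hdY : ∀ a, dY a = v * dX a)
    (g Rg : A) (hg : H g = dX Rg) :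
    H (g * v) - R * dY (g * v) = dY (Rg - g * R * v) := by
  have h1 : H 1 = 0 := by
    have := hHmul 1 1; rw [mul_one] at this; linear_combination -this
  have d1 : dX 1 = 0 := by
    have := hdmul 1 1; rw [mul_one] at this; linear_combination -this
  have hHv : H v = -(v * v * dX R) := by
    have h2 : H (v * (1 + f)) = 0 := by rw [hv, h1]
    rw [hHmul, hHadd, h1, hR] at h2
    have h3 : H v * (1 + f) = -(v * dX R) := by linear_combination h2
    calc H v = H v * (v * (1 + f)) := by rw [hv, mul_one]
      _ = v * (H v * (1 + f)) := by ring
      _ = -(v * v * dX R) := by rw [h3]; ring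
  have hdsub : ∀ a b, dX (a - b) = dX a - dX b := by
    intro a b
    have d0 : dX 0 = 0 := by
      have := hdadd 0 0; rw [add_zero] at this; linear_combination -this
    have dn : dX a + dX (b - a) = dX b := by
      rw [← hdadd]; ring_nf
    have h' : dX (a - b) + dX (b - a) = 0 := by
      rw [← hdadd, show (a - b) + (b - a) = 0 by ring, d0]
    linear_combination h' - dn
  rw [hdY, hdY, hdsub, hHmul, hHv, hg, hdmul, hdmul, hdmul]
  ring
end

section
/- Let $A$ be a commutative ring with derivation $\partial_x$, let $H$ be a derivation commuting with $\partial_x$, let $f \in A$ with $1+f$ invertible and $H(f) = \partial_x R$, and set $\partial_y := (1+f)^{-1}\partial_x$. If $\tilde g \in A$ satisfies $(H - R\partial_y)(\tilde g) = \partial_y R_{\tilde g}$ for some $R_{\tilde g} \in A$, then $H((1+f)\tilde g) = \partial_x(R_{\tilde g} + \tilde g R)$. -/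
/-- if `(H - R ∂_y)(g̃) = ∂_y R_g̃`, then
`H ((1+f) g̃) = ∂_x (R_g̃ + g̃ R)`, where `∂_y = (1+f)⁻¹ ∂_x`, `H f = ∂_x R`,
and `v = (1+f)⁻¹`. -/
theorem statement4 (A : Type*) [CommRing A] (H dX : A → A)
    (hHadd : ∀ a b, H (a + b) = H a + H b)
    (hHmul : ∀ a b, H (a * b) = a * H b + H a * b)
    (hdadd : ∀ a b, dX (a + b) = dX a + dX b)
    (hdmul : ∀ a b, dX (a * b) = a * dX b + dX a * b)
    (hcomm : ∀ a, H (dX a) = dX (H a))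
    (f R v : A) (hv : v * (1 + f) = 1) (hR : H f = dX R)
    (dY : A → A) (hdY : ∀ a, dY a = v * dX a)
    (tg Rtg : A) (htg : H tg - R * dY tg = dY Rtg) :
    H ((1 + f) * tg) = dX (Rtg + tg * R) := by
  have h1 : H tg = R * (v * dX tg) + v * dX Rtg := by
    rw [hdY, hdY] at htg
    linear_combination htg
  rw [show (1 + f) * tg = tg + f * tg by ring, hHadd, hHmul, hR, hdadd, hdmul, h1]
  linear_combination (R * dX tg + dX Rtg) * hv
end

section
/- Let $\xi \in \mathbb C$ and work in $\mathbb C[[\bar u^1, \bar u^2]]$. For $d \geq -1$ define $2\times 2$ matrices $P_d := \begin{pmatrix} \frac{(\bar u^1)^{d+1}}{(d+1)!} & M_d \\ 0 & \frac{(\bar u^2)^{d+1}}{(d+1)!} \end{pmatrix}$ where $M_d := -\frac{\xi\left((\bar u^1)^{d+2} - (d+2)\bar u^1(\bar u^2)^{d+1} + (d+1)(\bar u^2)^{d+2}\right)}{(d+2)!}$ for $d \geq 0$ and $P_{-1} := \mathrm{Id}$. Define $C_1 := \begin{pmatrix} \frac{1}{1+\xi\bar u^2} & \frac{\xi(\bar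 u^2 - \bar u^1)}{1+\xi\bar u^2} \\ 0 & 0 \end{pmatrix}$ and $C_2 := \begin{pmatrix} \frac{\xi(\bar u^2 - \bar u^1)}{1+\xi\bar u^2} & \frac{\xi(\bar u^1 - \bar u^2)(1+\xi\bar u^1)}{1+\xi\bar u^2} \\ 0 & 1 \end{pmatrix}$. Let $D_1 := \frac{1}{1+\xi\bar u^2}\frac{\partial}{\partial\bar u^1}$ and $D_2 := \xi\frac{\bar u^2 - \bar u^1}{1+\xi\bar u^2}\frac{\partial}{\partial\bar u^1} + \frac{\partial}{\partial\bar u^2}$ (applied entrywise to matrices). Then for all $d \geq 0$ and $\gamma \in \{1,2\}$: $D_\gamma P_d = C_\gamma \cdot P_{d-1}$, and $P_d|_{\bar u^1 = \bar u^2 = 0} = 0$. -/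
open scoped Classical

noncomputable section

abbrev S2 := MvPowerSeries (Fin 2) ℂ

/-- Partial derivative `∂/∂u^i` on `ℂ[[u¹,u²]]`, defined coefficientwise. -/
def pdv (i : Fin 2) (f : S2) : S2 := fun m =>
  (m i + 1) • MvPowerSeries.coeff (m + Finsupp.single i 1) f

def CC (c : ℂ) : S2 := MvPowerSeries.C c

def U1 : S2 := MvPowerSeries.X 0
def U2 : S2 := MvPowerSeries.X 1

/-- The matrices `P_d` of the dispersionless DR hierarchy, indexed so that
`Pmat ξ 0 = P_{-1} = Id` and `Pmat ξ (n+1) = P_n`. -/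
def Pmat (ξ : ℂ) : ℕ → Matrix (Fin 2) (Fin 2) S2
  | 0 => 1
  | n + 1 =>
    !![CC ((Nat.factorial (n + 1) : ℂ))⁻¹ * U1 ^ (n + 1),
        -(CC ξ * CC ((Nat.factorial (n + 2) : ℂ))⁻¹ *
          (U1 ^ (n + 2) - CC ((n : ℂ) + 2) * U1 * U2 ^ (n + 1) +
            CC ((n : ℂ) + 1) * U2 ^ (n + 2)));
      0, CC ((Nat.factorial (n + 1) : ℂ))⁻¹ * U2 ^ (n + 1)]


-- Auxiliary lemmas ------------------------------------------------------

lemma coeff_pdv (i : Fin 2) (f : S2) (m : Fin 2 →₀ ℕ) :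
    MvPowerSeries.coeff m (pdv i f) = (m i + 1) • MvPowerSeries.coeff (m + Finsupp.single i 1) f := rfl

lemma pdv_monomial (i : Fin 2) (m0 : Fin 2 →₀ ℕ) (c : ℂ) :
    pdv i (MvPowerSeries.monomial m0 c) = MvPowerSeries.monomial (m0 - Finsupp.single i 1) ((m0 i : ℂ) * c) := by
  ext m
  rw [coeff_pdv]
  simp only [MvPowerSeries.coeff_monomial]
  by_cases h : m + Finsupp.single i 1 = m0
  · have h1 : m0 - Finsupp.single i 1 = m := by rw [← h]; exact add_tsub_cancel_right m _
    have h2 : m0 i = m i + 1 := by rw [← h]; simp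
    simp [h, h1, h2]
  · rw [if_neg h]
    by_cases h' : m = m0 - Finsupp.single i 1
    · rw [if_pos h']
      have hz : m0 i = 0 := by
        by_contra hz
        apply h
        rw [h', tsub_add_cancel_of_le]
        exact Finsupp.single_le_iff.mpr (Nat.one_le_iff_ne_zero.mpr hz)
      simp [hz]
    · rw [if_neg h']
      simp

lemma pdv_add (i : Fin 2) (f g : S2) : pdv i (f + g) = pdv i f + pdv i g := by
  ext m; simp [coeff_pdv, map_add, smul_add]

lemma pdv_neg (i : Fin 2) (f : S2) : pdv i (-f) = -pdv i f := by
  ext m; simp [coeff_pdv]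

lemma pdv_sub (i : Fin 2) (f g : S2) : pdv i (f - g) = pdv i f - pdv i g := by
  ext m; simp [coeff_pdv, map_sub, smul_sub]

lemma pdv_zero (i : Fin 2) : pdv i 0 = 0 := by ext m; simp [coeff_pdv]

lemma pdv_Cmul (i : Fin 2) (c : ℂ) (f : S2) : pdv i (CC c * f) = CC c * pdv i f := by
  ext m
  rw [coeff_pdv]
  simp [CC, MvPowerSeries.coeff_C_mul, coeff_pdv, mul_smul_comm]; ring

lemma mono_eq (a b : ℕ) : U1 ^ a * U2 ^ b = MvPowerSeries.monomial (Finsupp.single 0 a + Finsupp.single 1 b) 1 := by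
  rw [U1, U2, MvPowerSeries.X_pow_eq, MvPowerSeries.X_pow_eq, MvPowerSeries.monomial_mul_monomial, one_mul]

lemma sub01 (a b : ℕ) : (Finsupp.single (0:Fin 2) (a+1) + Finsupp.single 1 b) - Finsupp.single 0 1
    = Finsupp.single (0:Fin 2) a + Finsupp.single 1 b := by
  ext x
  rw [Finsupp.tsub_apply]
  fin_cases x <;> simp [Finsupp.single_apply]

lemma sub10 (a b : ℕ) : (Finsupp.single (0:Fin 2) a + Finsupp.single 1 (b+1)) - Finsupp.single 1 1
    = Finsupp.single (0:Fin 2) a + Finsupp.single 1 b := by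
  ext x
  rw [Finsupp.tsub_apply]
  fin_cases x <;> simp [Finsupp.single_apply]

lemma CC_mul_mono (c : ℂ) (m0 : Fin 2 →₀ ℕ) : CC c * MvPowerSeries.monomial m0 1 = MvPowerSeries.monomial m0 c := by
  rw [CC, ← MvPowerSeries.monomial_zero_eq_C_apply, MvPowerSeries.monomial_mul_monomial, zero_add, mul_one]

lemma pdv0_mono (a b : ℕ) : pdv 0 (U1 ^ (a+1) * U2 ^ b) = CC ((a:ℂ)+1) * (U1 ^ a * U2 ^ b) := by
  rw [mono_eq, pdv_monomial, sub01, mono_eq, CC_mul_mono]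
  congr 1
  simp [Finsupp.single_apply]

lemma pdv1_mono (a b : ℕ) : pdv 1 (U1 ^ a * U2 ^ (b+1)) = CC ((b:ℂ)+1) * (U1 ^ a * U2 ^ b) := by
  rw [mono_eq, pdv_monomial, sub10, mono_eq, CC_mul_mono]
  congr 1
  simp [Finsupp.single_apply]

lemma pdv0_U2 (b : ℕ) : pdv 0 (U2 ^ b) = 0 := by
  have := mono_eq 0 b
  simp only [pow_zero, one_mul] at this
  rw [this, pdv_monomial]
  simp [Finsupp.single_apply]

lemma pdv1_U1 (a : ℕ) : pdv 1 (U1 ^ a) = 0 := by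
  have := mono_eq a 0
  simp only [pow_zero, mul_one] at this
  rw [this, pdv_monomial]
  simp [Finsupp.single_apply]

lemma pdv0_U1 (a : ℕ) : pdv 0 (U1 ^ (a+1)) = CC ((a:ℂ)+1) * U1 ^ a := by
  have := pdv0_mono a 0
  simpa using this

lemma pdv1_U2 (b : ℕ) : pdv 1 (U2 ^ (b+1)) = CC ((b:ℂ)+1) * U2 ^ b := by
  have := pdv1_mono 0 b
  simpa using this

lemma CC_mul (a b : ℂ) : CC (a*b) = CC a * CC b := map_mul _ _ _
lemma CC_one : CC 1 = 1 := map_one _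
lemma CC_two : CC 2 = 2 := map_ofNat _ 2
lemma CC_three : CC 3 = 3 := map_ofNat _ 3
lemma CC_add (a b : ℂ) : CC (a+b) = CC a + CC b := map_add _ _ _

lemma fact_rel (m : ℕ) : CC (((m+1).factorial : ℂ))⁻¹ * CC ((m:ℂ)+1) = CC ((m.factorial : ℂ))⁻¹ := by
  rw [← CC_mul]
  congr 1
  have h1 : ((m:ℂ)+1) ≠ 0 := by
    have : (((m+1:ℕ)):ℂ) ≠ 0 := Nat.cast_ne_zero.mpr (Nat.succ_ne_zero m)
    push_cast at this; exact this
  have hf : (((m+1).factorial : ℕ) : ℂ) = ((m:ℂ)+1) * (m.factorial : ℂ) := by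
    rw [Nat.factorial_succ]; push_cast; ring
  rw [hf, mul_inv, mul_comm ((m:ℂ)+1)⁻¹ _, mul_assoc, inv_mul_cancel₀ h1, mul_one]

/-- the matrices `P_d` satisfy the recursion `D_γ P_d = C_γ · P_{d-1}`
of the dispersionless DR hierarchy and vanish at the origin. Here
`w = (1+ξū²)⁻¹`, `D₁ = w ∂/∂ū¹`, `D₂ = ξ(ū²-ū¹)w ∂/∂ū¹ + ∂/∂ū²`. -/
theorem statement7 (ξ : ℂ) (w : S2) (hw : (1 + CC ξ * U2) * w = 1)
    (C1 C2 : Matrix (Fin 2) (Fin 2) S2)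
    (hC1 : C1 = !![w, CC ξ * (U2 - U1) * w; 0, 0])
    (hC2 : C2 = !![CC ξ * (U2 - U1) * w, CC ξ * (U1 - U2) * (1 + CC ξ * U1) * w; 0, 1])
    (D1 D2 : Matrix (Fin 2) (Fin 2) S2 → Matrix (Fin 2) (Fin 2) S2)
    (hD1 : ∀ M, D1 M = M.map fun f => w * pdv 0 f)
    (hD2 : ∀ M, D2 M = M.map fun f => CC ξ * (U2 - U1) * w * pdv 0 f + pdv 1 f) :
    ∀ n : ℕ,
      D1 (Pmat ξ (n + 1)) = C1 * Pmat ξ n ∧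
      D2 (Pmat ξ (n + 1)) = C2 * Pmat ξ n ∧
      ∀ i j : Fin 2, MvPowerSeries.constantCoeff (Pmat ξ (n + 1) i j) = 0 := by
  intro n
  refine ⟨?_, ?_, ?_⟩
  · -- D1 recursion
    rw [hD1, hC1]
    refine Matrix.ext fun i j => ?_
    rcases n with _ | n
    · have e1 : pdv 0 (U1 ^ 2) = CC 2 * U1 := by have := pdv0_U1 1; norm_num at this; exact this
      have e2 : pdv 0 (U1 * U2) = U2 := by have := pdv0_mono 0 1; simpa [CC_one] using this
      have e3 : pdv 0 (U2 ^ 2) = 0 := pdv0_U2 2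
      have e4 : pdv 0 U1 = 1 := by have := pdv0_U1 0; simpa [CC_one] using this
      have e5 : pdv 0 U2 = 0 := by have := pdv0_U2 1; simpa using this
      have h2 : CC (2:ℂ)⁻¹ * CC 2 = 1 := by rw [← CC_mul]; norm_num [CC_one]
      fin_cases i <;> fin_cases j <;>
        simp [Pmat, Matrix.mul_apply, Fin.sum_univ_two, Matrix.map_apply, mul_assoc,
          pdv_neg, pdv_add, pdv_sub, pdv_Cmul, pdv_zero, e1, e2, e3, e4, e5, CC_one]
      · linear_combination (-(w * CC ξ * (U1 - U2))) * h2
    · have hnat : n + 1 + 1 = n + 2 := rfl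
      have hnat2 : n + 1 + 2 = n + 3 := rfl
      have ga1 : pdv 0 (U1 ^ (n+2)) = CC ((n:ℂ)+2) * U1 ^ (n+1) := by
        have := pdv0_U1 (n+1); push_cast at this
        rw [show ((n:ℂ)+1+1) = (n:ℂ)+2 by ring] at this; exact this
      have ga2 : pdv 0 (U1 ^ (n+3)) = CC ((n:ℂ)+3) * U1 ^ (n+2) := by
        have := pdv0_U1 (n+2); push_cast at this
        rw [show ((n:ℂ)+2+1) = (n:ℂ)+3 by ring] at this; exact this
      have gb1 : pdv 0 (U1 * U2 ^ (n+2)) = U2 ^ (n+2) := by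
        have := pdv0_mono 0 (n+2); norm_num [CC_one] at this; exact this
      have h2 : CC ((((n+2).factorial : ℕ)):ℂ)⁻¹ * CC ((n:ℂ)+2) = CC ((((n+1).factorial : ℕ)):ℂ)⁻¹ := by
        have := fact_rel (n+1); push_cast at this
        rw [show ((n:ℂ)+1+1) = (n:ℂ)+2 by ring] at this; exact this
      have h3 : CC ((((n+3).factorial : ℕ)):ℂ)⁻¹ * CC ((n:ℂ)+3) = CC ((((n+2).factorial : ℕ)):ℂ)⁻¹ := by
        have := fact_rel (n+2); push_cast at this
        rw [show ((n:ℂ)+2+1) = (n:ℂ)+3 by ring] at this; exact this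
      fin_cases i <;> fin_cases j <;>
        simp [Pmat, Matrix.mul_apply, Fin.sum_univ_two, Matrix.map_apply, mul_assoc, hnat, hnat2,
          pdv_neg, pdv_add, pdv_sub, pdv_Cmul, pdv_zero, pdv0_U2, pdv1_U1, CC_one,
          ga1, ga2, gb1]
      · rw [← h2]; ring_nf; simp
      · rw [← h2, ← h3]
        simp only [CC_add, CC_one, CC_two, CC_three]
        ring
  · -- D2 recursion
    rw [hD2, hC2]
    refine Matrix.ext fun i j => ?_
    rcases n with _ | n
    · have e1 : pdv 0 (U1 ^ 2) = CC 2 * U1 := by have := pdv0_U1 1; norm_num at this; exact this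
      have e2 : pdv 0 (U1 * U2) = U2 := by have := pdv0_mono 0 1; simpa [CC_one] using this
      have e3 : pdv 0 (U2 ^ 2) = 0 := pdv0_U2 2
      have e4 : pdv 0 U1 = 1 := by have := pdv0_U1 0; simpa [CC_one] using this
      have e5 : pdv 0 U2 = 0 := by have := pdv0_U2 1; simpa using this
      have f1 : pdv 1 (U1 ^ 2) = 0 := pdv1_U1 2
      have f2 : pdv 1 (U1 * U2) = U1 := by have := pdv1_mono 1 0; simpa [CC_one] using this
      have f3 : pdv 1 (U2 ^ 2) = CC 2 * U2 := by have := pdv1_U2 1; norm_num at this; exact this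
      have f4 : pdv 1 U1 = 0 := by have := pdv1_U1 1; simpa using this
      have f5 : pdv 1 U2 = 1 := by have := pdv1_U2 0; simpa [CC_one] using this
      have h2 : CC (2:ℂ)⁻¹ * CC 2 = 1 := by rw [← CC_mul]; norm_num [CC_one]
      fin_cases i <;> fin_cases j <;>
        simp [Pmat, Matrix.mul_apply, Fin.sum_univ_two, Matrix.map_apply, mul_assoc,
          pdv_neg, pdv_add, pdv_sub, pdv_Cmul, pdv_zero, e1, e2, e3, e4, e5,
          f1, f2, f3, f4, f5, CC_one]
      · linear_combination (-(CC ξ * (U1-U2))) * hw + (CC ξ*CC ξ*(U2-U1)*(U2-U1)*w + CC ξ*(U1-U2)) * h2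
    · have hnat : n + 1 + 1 = n + 2 := rfl
      have hnat2 : n + 1 + 2 = n + 3 := rfl
      have ga1 : pdv 0 (U1 ^ (n+2)) = CC ((n:ℂ)+2) * U1 ^ (n+1) := by
        have := pdv0_U1 (n+1); push_cast at this
        rw [show ((n:ℂ)+1+1) = (n:ℂ)+2 by ring] at this; exact this
      have ga2 : pdv 0 (U1 ^ (n+3)) = CC ((n:ℂ)+3) * U1 ^ (n+2) := by
        have := pdv0_U1 (n+2); push_cast at this
        rw [show ((n:ℂ)+2+1) = (n:ℂ)+3 by ring] at this; exact this
      have gb1 : pdv 0 (U1 * U2 ^ (n+2)) = U2 ^ (n+2) := by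
        have := pdv0_mono 0 (n+2); norm_num [CC_one] at this; exact this
      have gc1 : pdv 1 (U2 ^ (n+2)) = CC ((n:ℂ)+2) * U2 ^ (n+1) := by
        have := pdv1_U2 (n+1); push_cast at this
        rw [show ((n:ℂ)+1+1) = (n:ℂ)+2 by ring] at this; exact this
      have gc2 : pdv 1 (U2 ^ (n+3)) = CC ((n:ℂ)+3) * U2 ^ (n+2) := by
        have := pdv1_U2 (n+2); push_cast at this
        rw [show ((n:ℂ)+2+1) = (n:ℂ)+3 by ring] at this; exact this
      have gd1 : pdv 1 (U1 * U2 ^ (n+2)) = CC ((n:ℂ)+2) * (U1 * U2 ^ (n+1)) := by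
        have := pdv1_mono 1 (n+1); push_cast [pow_one] at this
        rw [show ((n:ℂ)+1+1) = (n:ℂ)+2 by ring] at this; exact this
      have h2 : CC ((((n+2).factorial : ℕ)):ℂ)⁻¹ * CC ((n:ℂ)+2) = CC ((((n+1).factorial : ℕ)):ℂ)⁻¹ := by
        have := fact_rel (n+1); push_cast at this
        rw [show ((n:ℂ)+1+1) = (n:ℂ)+2 by ring] at this; exact this
      have h3 : CC ((((n+3).factorial : ℕ)):ℂ)⁻¹ * CC ((n:ℂ)+3) = CC ((((n+2).factorial : ℕ)):ℂ)⁻¹ := by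
        have := fact_rel (n+2); push_cast at this
        rw [show ((n:ℂ)+2+1) = (n:ℂ)+3 by ring] at this; exact this
      fin_cases i <;> fin_cases j <;>
        simp [Pmat, Matrix.mul_apply, Fin.sum_univ_two, Matrix.map_apply, mul_assoc, hnat, hnat2,
          pdv_neg, pdv_add, pdv_sub, pdv_Cmul, pdv_zero, pdv0_U2, pdv1_U1, CC_one,
          ga1, ga2, gb1, gc1, gc2, gd1]
      · rw [← h2, ← h3]; simp only [CC_add, CC_one, CC_two, CC_three]; ring_nf; simp
      · rw [← h2, ← h3]; simp only [CC_add, CC_one, CC_two, CC_three]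
        linear_combination (-(CC ξ * (U1 - U2) * CC ((((n+3).factorial:ℕ)):ℂ)⁻¹ * (CC (n:ℂ) + 3) * (CC (n:ℂ) + 2) * U2 ^ (n+1))) * hw
      · rw [← h2, ← h3]; simp only [CC_add, CC_one, CC_two, CC_three]; ring
  · -- constant coefficients vanish
    intro i j
    fin_cases i <;> fin_cases j <;>
      simp [Pmat, CC, U1, U2, map_mul, map_pow, map_sub, map_add, map_neg,
        MvPowerSeries.constantCoeff_X]


end
end
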